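/- Fix a finite connected weighted graph G, positive site weights α̂, and k ≥ 2. With h_ξ(ζ) := lim_{t→∞} (e^{t B_k} 1_ξ)(ζ) and r^M(η,ξ) := Σ_{ζ∈Ξ_k} r^A(η,ζ) h_ξ(ζ) for ξ ≠ η, the restriction of the metastable chain to single-stack configurations evolves as the random walk RW(G,α̂): for all distinct x, y ∈ V, r^M(k·δ_x, k·δ_y) = c_{xy} · α̂_y. -/

import Mathlib

open scoped BigOperators Classical

noncomputable section

/-- The configuration space of `k` particles on the finite site set `V`. -/
def Config (V : Type*) [Fintype V] (k : ℕ) : Type _ :=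
  {η : V → ℕ // ∑ x, η x = k}

namespace Config

variable {V : Type*} [Fintype V] [DecidableEq V] {k : ℕ}

lemma apply_le (η : Config V k) (x : V) : η.1 x ≤ k := by
  have h := Finset.single_le_sum (f := η.1) (fun i _ => Nat.zero_le _) (Finset.mem_univ x)
  simpa [η.2] using h

instance instFintype : Fintype (Config V k) :=
  Fintype.ofInjective
    (fun η : Config V k => (fun x => (⟨η.1 x, Nat.lt_succ_of_le (η.apply_le x)⟩ : Fin (k+1))))
    (fun a b hab => Subtype.ext (funext fun x => congrArg Fin.val (congrFun hab x)))

/-- The configuration `η - δ_x + δ_y` (move a particle from `x` to `y`);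
by convention it is `η` itself when `η` has no particle at `x`. -/
def move (η : Config V k) (x y : V) : Config V k :=
  if h : η.1 x = 0 then η else
    ⟨fun z => η.1 z - (if z = x then 1 else 0) + (if z = y then 1 else 0), by
      have hle : ∀ z : V, (if z = x then 1 else 0) ≤ η.1 z := fun z => by
        by_cases hz : z = x
        · simpa [hz] using Nat.one_le_iff_ne_zero.2 h
        · simp [hz]
      have cast_term : ∀ z : V,
          ((η.1 z - (if z = x then 1 else 0) + (if z = y then 1 else 0) : ℕ) : ℤ)
            = (η.1 z : ℤ) - (if z = x then 1 else 0) + (if z = y then 1 else 0) := by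
        intro z
        rw [Nat.cast_add, Nat.cast_sub (hle z)]
        by_cases hz : z = x <;> by_cases hz' : z = y <;> simp [hz, hz']
      have key : ((∑ z, (η.1 z - (if z = x then 1 else 0) + (if z = y then 1 else 0)) : ℕ) : ℤ)
          = (k : ℤ) := by
        rw [Nat.cast_sum]
        rw [Finset.sum_congr rfl (fun z _ => cast_term z)]
        rw [Finset.sum_add_distrib, Finset.sum_sub_distrib]
        have h1 : (∑ z, (η.1 z : ℤ)) = (k : ℤ) := by
          rw [← Nat.cast_sum, η.2]
        rw [h1]
        simp
      exact_mod_cast key⟩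

/-- The configuration `η + δ_x`. -/
def addOne (η : Config V k) (x : V) : Config V (k + 1) :=
  ⟨fun z => η.1 z + (if z = x then 1 else 0), by
    rw [Finset.sum_add_distrib, η.2]
    simp⟩

end Config

section Defs

variable {V : Type*} [Fintype V] [DecidableEq V]

/-- The configuration with `k` particles stacked at `x`. -/
def stackConfig (V : Type*) [Fintype V] [DecidableEq V] (k : ℕ) (x : V) : Config V k :=
  ⟨fun z => if z = x then k else 0, by simp⟩

/-- Normalization constant `Z_{α,k}`. -/
def sipZ (α : V → ℝ) (k : ℕ) : ℝ :=
  Real.Gamma ((∑ x, α x) + k) / (Real.Gamma (∑ x, α x) * (Nat.factorial k))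

/-- The reversible (Dirichlet-multinomial) measure `μ_{α,k}` of SIP. -/
def sipMeasure (α : V → ℝ) {k : ℕ} (η : Config V k) : ℝ :=
  (sipZ α k)⁻¹ * ∏ x, Real.Gamma (α x + η.1 x) / (Real.Gamma (α x) * (Nat.factorial (η.1 x)))

/-- The Dirichlet form of `SIP_k(G, α)`. -/
def dirichletForm (c : V → V → ℝ) (α : V → ℝ) {k : ℕ} (f : Config V k → ℝ) : ℝ :=
  (1 / 2) * ∑ η : Config V k, ∑ x, ∑ y,
    sipMeasure α η * (c x y * η.1 x * (α y + η.1 y) * (f (η.move x y) - f η) ^ 2)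

/-- Mean of `f` under `μ_{α,k}`. -/
def sipMean (α : V → ℝ) {k : ℕ} (f : Config V k → ℝ) : ℝ :=
  ∑ η : Config V k, sipMeasure α η * f η

/-- Variance of `f` under `μ_{α,k}`. -/
def sipVar (α : V → ℝ) {k : ℕ} (f : Config V k → ℝ) : ℝ :=
  ∑ η : Config V k, sipMeasure α η * (f η - sipMean α f) ^ 2

/-- Squared `L²(μ_{α,k})`-norm of `f`. -/
def sipNormSq (α : V → ℝ) {k : ℕ} (f : Config V k → ℝ) : ℝ :=
  ∑ η : Config V k, sipMeasure α η * (f η) ^ 2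

/-- The spectral gap `gap_k(G,α)` of the `k`-particle SIP. -/
def sipGap (c : V → V → ℝ) (α : V → ℝ) (k : ℕ) : ℝ :=
  sInf {r : ℝ | ∃ f : Config V k → ℝ, (∃ η ζ : Config V k, f η ≠ f ζ) ∧
    r = dirichletForm c α f / sipVar α f}

/-- `gap_SIP(G,α) = inf_{k ≥ 2} gap_k(G,α)`. -/
def sipGapInf (c : V → V → ℝ) (α : V → ℝ) : ℝ :=
  sInf {r : ℝ | ∃ k : ℕ, 2 ≤ k ∧ r = sipGap c α k}

/-- The simple graph underlying a symmetric family of conductances. -/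
def graphOf (c : V → V → ℝ) : SimpleGraph V where
  Adj x y := x ≠ y ∧ (0 < c x y ∨ 0 < c y x)
  symm := ⟨fun x y h => ⟨h.1.symm, h.2.symm⟩⟩
  loopless := ⟨fun x h => h.1 rfl⟩

/-- The diameter of the weighted graph: maximal graph distance between two sites. -/
def graphDiam (c : V → V → ℝ) : ℕ :=
  Finset.univ.sup (fun p : V × V => (graphOf c).dist p.1 p.2)

/-- The minimal positive conductance. -/
def cMin (c : V → V → ℝ) : ℝ :=
  sInf {r : ℝ | 0 < r ∧ ∃ x y, c x y = r}

/-- Minimal site weight. -/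
def alphaMin (α : V → ℝ) : ℝ := sInf (Set.range α)

/-- Maximal site weight. -/
def alphaMax (α : V → ℝ) : ℝ := sSup (Set.range α)

/-- Conductances of the complete graph on `V`. -/
def completeCond (V : Type*) [DecidableEq V] : V → V → ℝ :=
  fun x y => if x = y then 0 else 1

/-- The generator matrix of `SIP_k(G,α)` acting on `ℝ^{Ξ_k}` by `mulVec`. -/
def sipMatrix (c : V → V → ℝ) (α : V → ℝ) (k : ℕ) : Matrix (Config V k) (Config V k) ℝ :=
  fun η ζ => ∑ x, ∑ y, c x y * η.1 x * (α y + η.1 y) *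
    ((if η.move x y = ζ then 1 else 0) - (if ζ = η then 1 else 0))

/-- The generator matrix `A_{β,k}` of `k` independent random walks. -/
def rwPartMatrix (c : V → V → ℝ) (β : V → ℝ) (k : ℕ) : Matrix (Config V k) (Config V k) ℝ :=
  fun η ζ => ∑ x, ∑ y, c x y * η.1 x * β y *
    ((if η.move x y = ζ then 1 else 0) - (if ζ = η then 1 else 0))

/-- The generator matrix `B_k` of the pure interaction (fast) dynamics. -/
def clumpMatrix (c : V → V → ℝ) (k : ℕ) : Matrix (Config V k) (Config V k) ℝ :=
  fun η ζ => ∑ x, ∑ y, c x y * η.1 x * η.1 y *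
    ((if η.move x y = ζ then 1 else 0) - (if ζ = η then 1 else 0))

/-- The generator matrix of the purely absorbing (killed) SIP. -/
def killedMatrix (c : V → V → ℝ) (α ω : V → ℝ) (k : ℕ) :
    Matrix (Config V k) (Config V k) ℝ :=
  fun η ζ => sipMatrix c α k η ζ - (if ζ = η then ∑ x, ω x * η.1 x else 0)

/-- `η ∈ Ω_k`: absorbing configurations for the fast dynamics. -/
def inOmega (c : V → V → ℝ) {k : ℕ} (η : Config V k) : Prop :=
  ∀ x y, c x y * η.1 x * η.1 y = 0

/-- The number of occupied sites (stacks) of a configuration. -/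
def numStacks {k : ℕ} (η : Config V k) : ℕ :=
  (Finset.univ.filter fun x => 0 < η.1 x).card

/-- Jump rates of `k` independent random walks: `r^A(η,ζ)`. -/
def rateA (c : V → V → ℝ) (β : V → ℝ) {k : ℕ} (η ζ : Config V k) : ℝ :=
  ∑ x, ∑ y, if η.1 x ≠ 0 ∧ η.move x y = ζ then c x y * η.1 x * β y else 0

/-- Metastable jump rates `r^M(η,ξ) = Σ_ζ r^A(η,ζ) h_ξ(ζ)`, given absorption
probabilities `h`. -/
def rateM (c : V → V → ℝ) (β : V → ℝ) {k : ℕ} (h : Config V k → Config V k → ℝ)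
    (η ξ : Config V k) : ℝ :=
  ∑ ζ, rateA c β η ζ * h ξ ζ

/-- The metastable generator on `Ω_k`, given absorption probabilities `h`. -/
def metaGen (c : V → V → ℝ) (β : V → ℝ) {k : ℕ} (h : Config V k → Config V k → ℝ)
    (g : Config V k → ℝ) (η : Config V k) : ℝ :=
  ∑ ξ, if inOmega c ξ ∧ ξ ≠ η then rateM c β h η ξ * (g ξ - g η) else 0

/-- The (restricted) annihilation operator `â_{k+1} g (η) = Σ_x η_x g(η - δ_x)`. -/
def annihilate {k : ℕ} (g : Config V k → ℝ) (η : Config V (k + 1)) : ℝ :=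
  ∑ x, ∑ ξ : Config V k, if ξ.addOne x = η then (η.1 x : ℝ) * g ξ else 0

/-- The SIP generator as an operator on functions. -/
def sipGen (c : V → V → ℝ) (α : V → ℝ) {k : ℕ} (f : Config V k → ℝ) (η : Config V k) : ℝ :=
  ∑ x, ∑ y, c x y * η.1 x * (α y + η.1 y) * (f (η.move x y) - f η)

/-- The purely absorbing (killed) SIP generator. -/
def killedGen (c : V → V → ℝ) (α ω : V → ℝ) {k : ℕ} (f : Config V k → ℝ)
    (η : Config V k) : ℝ :=
  sipGen c α f η - f η * ∑ x, ω x * η.1 x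

/-- Spectral gap of the killed `k`-particle SIP (Rayleigh quotient infimum). -/
def killedGap (c : V → V → ℝ) (α ω : V → ℝ) (k : ℕ) : ℝ :=
  sInf {r : ℝ | ∃ f : Config V k → ℝ, f ≠ 0 ∧
    r = (∑ η, sipMeasure α η * f η * (-(killedGen c α ω f η))) / sipNormSq α f}

/-- `λ_{k,k}(β)`: the variational bottom eigenvalue of `k` independent walks killed
upon two particles becoming adjacent. -/
def lamLevel (c : V → V → ℝ) (β : V → ℝ) (k : ℕ) : ℝ :=
  sInf {r : ℝ | ∃ f : Config V k → ℝ, f ≠ 0 ∧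
    (∀ η : Config V k, ¬(inOmega c η ∧ numStacks η = k) → f η = 0) ∧
    r = dirichletForm c β f / sipNormSq β f}


/-- The symmetrizing measure `ς_{β,k,m}` on stack configurations. -/
def stackMeasure (β : V → ℝ) {k : ℕ} (η : Config V k) : ℝ :=
  ∏ x, if 0 < η.1 x then β x / η.1 x else 1

/-- The lookdown generator of the SIP with killing, on labeled configurations. -/
def lookdownGen (c : V → V → ℝ) (α ω : V → ℝ) (k : ℕ) (φ : (Fin k → V) → ℝ)
    (v : Fin k → V) : ℝ :=
  (∑ i : Fin k, ∑ x, ∑ y, c x y * (if x = v i then 1 else 0) *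
      (α y + 2 * ∑ j : Fin k, (if (j : ℕ) < (i : ℕ) ∧ v j = y then 1 else 0)) *
      (φ (Function.update v i y) - φ v))
    - φ v * ∑ i, ω (v i)

/-- The unlabeling map `Φ_k` from labeled to unlabeled configurations. -/
def unlabel {k : ℕ} (v : Fin k → V) : Config V k :=
  ⟨fun z => (Finset.univ.filter fun i => v i = z).card, by
    have h := Finset.card_eq_sum_card_fiberwise
      (f := v) (s := Finset.univ) (t := Finset.univ) (fun i _ => Finset.mem_univ _)
    simpa using h.symm⟩

/-- The symmetrization operator `S_k`. -/
def symmetrize (k : ℕ) (φ : (Fin k → V) → ℝ) (v : Fin k → V) : ℝ :=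
  (1 / (Nat.factorial k : ℝ)) * ∑ σ : Equiv.Perm (Fin k), φ (fun i => v (σ i))

/-- `η + δ_x` on the full configuration space `ℕ^V`. -/
def addFn (η : V → ℕ) (x : V) : V → ℕ := fun z => η z + (if z = x then 1 else 0)

/-- `η - δ_x` on the full configuration space (truncated subtraction). -/
def remFn (η : V → ℕ) (x : V) : V → ℕ := fun z => η z - (if z = x then 1 else 0)

/-- `η - δ_x + δ_y` on the full configuration space; `η` itself when `η x = 0`. -/
def moveFn (η : V → ℕ) (x y : V) : V → ℕ :=
  if η x = 0 then η else fun z => η z - (if z = x then 1 else 0) + (if z = y then 1 else 0)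

/-- The generator of the non-conservative (open) SIP. -/
def openGen (c : V → V → ℝ) (α ω θ : V → ℝ) (f : (V → ℕ) → ℝ) (η : V → ℕ) : ℝ :=
  (∑ x, ∑ y, c x y * η x * (α y + η y) * (f (moveFn η x y) - f η))
  + ∑ x, ω x * ((η x : ℝ) * (1 + θ x) * (f (remFn η x) - f η)
      + θ x * (α x + η x) * (f (addFn η x) - f η))

/-- One-site Meixner duality function at density `0`:
`d_{a,0}(m,n) = (n!/(n-m)!) (Γ(a)/Γ(a+m)) 1{m ≤ n}`. -/
def dualD0 (a : ℝ) (m n : ℕ) : ℝ :=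
  if m ≤ n then (Nat.descFactorial n m : ℝ) * (Real.Gamma a / Real.Gamma (a + m)) else 0

/-- One-site Meixner duality function at density `ϱ`. -/
def dualD (a ϱ : ℝ) (m n : ℕ) : ℝ :=
  ∑ l ∈ Finset.range (m + 1), (Nat.choose m l : ℝ) * dualD0 a l n * (-ϱ) ^ (m - l)

/-- The orthogonal duality function `D_{α,ϱ}(ξ,η)`. -/
def dualityFn (α : V → ℝ) (ϱ : ℝ) {k : ℕ} (ξ : Config V k) (η : V → ℕ) : ℝ :=
  ∏ x, dualD (α x) ϱ (ξ.1 x) (η x)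

/-- The polynomial `F_{α,ϱ}^ψ` associated to `ψ : Ξ_k → ℝ`. -/
def liftF (α : V → ℝ) (ϱ : ℝ) {k : ℕ} (ψ : Config V k → ℝ) (η : V → ℕ) : ℝ :=
  ∑ ξ : Config V k, sipMeasure α ξ * ψ ξ * dualityFn α ϱ ξ η

end Defs


end


noncomputable section MetaAux

namespace MetaAux

open scoped Classical

section Generic

variable {ι : Type*} [Fintype ι] [DecidableEq ι]

/-- Evaluation of `mulVec` at a fixed vector and index, as a continuous linear map. -/
def evalCLM (v : ι → ℝ) (i : ι) : Matrix ι ι ℝ →L[ℝ] ℝ :=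
  LinearMap.toContinuousLinearMap
  { toFun := fun M => M.mulVec v i
    map_add' := by intro A B; simp [Matrix.add_mulVec]
    map_smul' := by intro r A; simp [Matrix.smul_mulVec] }

lemma exp_mulVec_tsum (X : Matrix ι ι ℝ) (v : ι → ℝ) (i : ι) :
    Summable (fun m : ℕ => ((m.factorial : ℝ))⁻¹ * ((X ^ m).mulVec v i)) ∧
    (NormedSpace.exp X).mulVec v i
      = ∑' m : ℕ, ((m.factorial : ℝ))⁻¹ * ((X ^ m).mulVec v i) := by
  letI : SeminormedRing (Matrix ι ι ℝ) := Matrix.linftyOpSemiNormedRing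
  letI : NormedRing (Matrix ι ι ℝ) := Matrix.linftyOpNormedRing
  letI : NormedAlgebra ℝ (Matrix ι ι ℝ) := Matrix.linftyOpNormedAlgebra
  have hs : Summable fun m : ℕ => ((m.factorial : ℝ))⁻¹ • X ^ m :=
    NormedSpace.expSeries_summable' (𝕂 := ℝ) X
  have h1 : ∀ m : ℕ, (evalCLM v i) (((m.factorial : ℝ))⁻¹ • X ^ m)
      = ((m.factorial : ℝ))⁻¹ * ((X ^ m).mulVec v i) := by
    intro m
    simp [evalCLM, Matrix.smul_mulVec]
  constructor
  · have h2 := hs.map (evalCLM v i) (evalCLM v i).continuous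
    exact h2.congr h1
  · rw [NormedSpace.exp_eq_tsum ℝ]
    have h3 := (evalCLM v i).map_tsum hs
    calc ((∑' m : ℕ, ((m.factorial : ℝ))⁻¹ • X ^ m)).mulVec v i
        = (evalCLM v i) (∑' m : ℕ, ((m.factorial : ℝ))⁻¹ • X ^ m) := rfl
      _ = ∑' m : ℕ, (evalCLM v i) (((m.factorial : ℝ))⁻¹ • X ^ m) := h3
      _ = ∑' m : ℕ, ((m.factorial : ℝ))⁻¹ * ((X ^ m).mulVec v i) := tsum_congr h1

lemma real_exp_tsum (z : ℝ) :
    Summable (fun m : ℕ => ((m.factorial : ℝ))⁻¹ * z ^ m) ∧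
    Real.exp z = ∑' m : ℕ, ((m.factorial : ℝ))⁻¹ * z ^ m := by
  constructor
  · exact (Real.summable_pow_div_factorial z).congr fun m => by
      rw [div_eq_mul_inv, mul_comm]
  · rw [Real.exp_eq_exp_ℝ, NormedSpace.exp_eq_tsum ℝ]
    exact tsum_congr fun m => by rw [smul_eq_mul]

lemma pow_entry_nonneg {A : Matrix ι ι ℝ} (hA : ∀ i j, 0 ≤ A i j) :
    ∀ (m : ℕ) (i j : ι), 0 ≤ (A ^ m) i j := by
  intro m
  induction m with
  | zero =>
      intro i j
      rw [pow_zero, Matrix.one_apply]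
      split <;> norm_num
  | succ m ih =>
      intro i j
      rw [pow_succ, Matrix.mul_apply]
      exact Finset.sum_nonneg fun l _ => mul_nonneg (ih i l) (hA l j)

lemma mulVec_nonneg {A : Matrix ι ι ℝ} (hA : ∀ i j, 0 ≤ A i j) {v : ι → ℝ}
    (hv : ∀ j, 0 ≤ v j) (i : ι) : 0 ≤ A.mulVec v i := by
  simp only [Matrix.mulVec, dotProduct]
  exact Finset.sum_nonneg fun j _ => mul_nonneg (hA i j) (hv j)

lemma mulVec_mono {A : Matrix ι ι ℝ} (hA : ∀ i j, 0 ≤ A i j) {u w : ι → ℝ}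
    (huw : ∀ j, u j ≤ w j) (i : ι) : A.mulVec u i ≤ A.mulVec w i := by
  simp only [Matrix.mulVec, dotProduct]
  exact Finset.sum_le_sum fun j _ => mul_le_mul_of_nonneg_left (huw j) (hA i j)

lemma mulVec_const_mul (A : Matrix ι ι ℝ) (s : ℝ) (f : ι → ℝ) (i : ι) :
    A.mulVec (fun j => s * f j) i = s * A.mulVec f i := by
  simp only [Matrix.mulVec, dotProduct, Finset.mul_sum]
  exact Finset.sum_congr rfl fun j _ => by ring

lemma pow_mulVec_vanish {A : Matrix ι ι ℝ} {P : ι → Prop}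
    (hcl : ∀ i j, P i → A i j ≠ 0 → P j) {v : ι → ℝ} (hv : ∀ i, P i → v i = 0) :
    ∀ (m : ℕ) (i : ι), P i → (A ^ m).mulVec v i = 0 := by
  intro m
  induction m with
  | zero =>
      intro i hi
      rw [pow_zero, Matrix.one_mulVec]
      exact hv i hi
  | succ m ih =>
      intro i hi
      rw [pow_succ', ← Matrix.mulVec_mulVec]
      set g := (A ^ m).mulVec v with hg
      simp only [Matrix.mulVec, dotProduct]
      refine Finset.sum_eq_zero fun j _ => ?_
      by_cases hAij : A i j = 0
      · rw [hAij, zero_mul]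
      · rw [show g j = 0 from ih j (hcl i j hi hAij), mul_zero]

lemma pow_mulVec_le {A : Matrix ι ι ℝ} (hA : ∀ i j, 0 ≤ A i j) {P : ι → Prop}
    (hcl : ∀ i j, P i → A i j ≠ 0 → P j) {f : ι → ℝ} {r : ℝ} (hr : 0 ≤ r)
    (hstep : ∀ i, P i → A.mulVec f i ≤ r * f i) :
    ∀ (m : ℕ) (i : ι), P i → (A ^ m).mulVec f i ≤ r ^ m * f i := by
  intro m
  induction m with
  | zero =>
      intro i hi
      rw [pow_zero, Matrix.one_mulVec, pow_zero, one_mul]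
  | succ m ih =>
      intro i hi
      rw [pow_succ', ← Matrix.mulVec_mulVec]
      have h1 : A.mulVec ((A ^ m).mulVec f) i ≤ A.mulVec (fun j => r ^ m * f j) i := by
        set g := (A ^ m).mulVec f with hg
        simp only [Matrix.mulVec, dotProduct]
        refine Finset.sum_le_sum fun j _ => ?_
        by_cases hAij : A i j = 0
        · rw [hAij, zero_mul, zero_mul]
        · exact mul_le_mul_of_nonneg_left (ih j (hcl i j hi hAij)) (hA i j)
      calc A.mulVec ((A ^ m).mulVec f) i
          ≤ A.mulVec (fun j => r ^ m * f j) i := h1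
        _ = r ^ m * A.mulVec f i := mulVec_const_mul A _ f i
        _ ≤ r ^ m * (r * f i) := mul_le_mul_of_nonneg_left (hstep i hi) (pow_nonneg hr m)
        _ = r ^ (m + 1) * f i := by ring

lemma exp_smul_one (z : ℝ) :
    NormedSpace.exp (z • (1 : Matrix ι ι ℝ)) = Real.exp z • (1 : Matrix ι ι ℝ) := by
  letI : SeminormedRing (Matrix ι ι ℝ) := Matrix.linftyOpSemiNormedRing
  letI : NormedRing (Matrix ι ι ℝ) := Matrix.linftyOpNormedRing
  letI : NormedAlgebra ℝ (Matrix ι ι ℝ) := Matrix.linftyOpNormedAlgebra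
  have hexp : NormedSpace.exp (z • (1 : Matrix ι ι ℝ))
      = ∑' m : ℕ, ((m.factorial : ℝ))⁻¹ • (z • (1 : Matrix ι ι ℝ)) ^ m :=
    congrFun (NormedSpace.exp_eq_tsum ℝ) _
  have h1 : ∀ m : ℕ, ((m.factorial : ℝ))⁻¹ • (z • (1 : Matrix ι ι ℝ)) ^ m
      = (((m.factorial : ℝ))⁻¹ * z ^ m) • (1 : Matrix ι ι ℝ) := by
    intro m
    rw [smul_pow, one_pow, smul_smul]
  rw [hexp, tsum_congr h1, (real_exp_tsum z).1.tsum_smul_const, ← (real_exp_tsum z).2]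

lemma exp_shift (t ρ : ℝ) (X : Matrix ι ι ℝ) :
    NormedSpace.exp (t • X)
      = Real.exp (-(t * ρ)) •
        NormedSpace.exp (t • X + (t * ρ) • (1 : Matrix ι ι ℝ)) := by
  have hcomm : Commute (t • X) ((t * ρ) • (1 : Matrix ι ι ℝ)) :=
    (Commute.one_right (t • X)).smul_right (t * ρ)
  have h1 : NormedSpace.exp (t • X + (t * ρ) • (1 : Matrix ι ι ℝ))
      = NormedSpace.exp (t • X) * NormedSpace.exp ((t * ρ) • (1 : Matrix ι ι ℝ)) :=
    Matrix.exp_add_of_commute _ _ hcomm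
  rw [h1, exp_smul_one, mul_smul_comm, mul_one, smul_smul, ← Real.exp_add]
  norm_num

end Generic

section ConfigLemmas

variable {V : Type*} [Fintype V] [DecidableEq V] {k : ℕ}

/-- Configurations supported on `{x, y}`. -/
def SuppIn (x y : V) (η : Config V k) : Prop := ∀ z, z ≠ x → z ≠ y → η.1 z = 0

lemma move_coe (η : Config V k) {x : V} (hx : η.1 x ≠ 0) (y z : V) :
    (η.move x y).1 z = η.1 z - (if z = x then 1 else 0) + (if z = y then 1 else 0) := by
  simp [Config.move, hx]

lemma move_coe_real (η : Config V k) {a : V} (h0 : η.1 a ≠ 0) (b z : V) :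
    (((η.move a b).1 z : ℕ) : ℝ)
      = (η.1 z : ℝ) - (if z = a then 1 else 0) + (if z = b then 1 else 0) := by
  rw [move_coe η h0 b z]
  have h1 : (if z = a then 1 else 0) ≤ η.1 z := by
    by_cases hz : z = a
    · subst hz; simpa using Nat.one_le_iff_ne_zero.2 h0
    · simp [hz]
  push_cast [h1]
  by_cases hz : z = a <;> by_cases hz' : z = b <;> simp [hz, hz']

lemma clump_mulVec (c : V → V → ℝ) (v : Config V k → ℝ) (η : Config V k) :
    (clumpMatrix c k).mulVec v η
      = ∑ a, ∑ b, c a b * η.1 a * η.1 b * (v (η.move a b) - v η) := by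
  unfold clumpMatrix Matrix.mulVec dotProduct
  simp only [Finset.sum_mul]
  rw [Finset.sum_comm]
  refine Finset.sum_congr rfl fun a _ => ?_
  rw [Finset.sum_comm]
  refine Finset.sum_congr rfl fun b _ => ?_
  simp only [sub_mul, mul_assoc, mul_sub, ite_mul, one_mul, zero_mul]
  rw [Finset.sum_sub_distrib]
  simp only [← Finset.mul_sum]
  rw [Finset.sum_ite_eq, Finset.sum_ite_eq']
  simp [mul_sub]

lemma move_suppIn {x y : V} {η : Config V k} (hη : SuppIn x y η) {a b : V}
    (ha : a = x ∨ a = y) (hb : b = x ∨ b = y) : SuppIn x y (η.move a b) := by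
  intro z hzx hzy
  by_cases h0 : η.1 a = 0
  · simpa [Config.move, h0] using hη z hzx hzy
  · rw [move_coe η h0 b z]
    have hza : z ≠ a := by rcases ha with h | h <;> (subst h; assumption)
    have hzb : z ≠ b := by rcases hb with h | h <;> (subst h; assumption)
    simp [hza, hzb, hη z hzx hzy]

lemma clump_closed (c : V → V → ℝ) (x y : V) {η ζ : Config V k} (hη : SuppIn x y η)
    (hB : clumpMatrix c k η ζ ≠ 0) : SuppIn x y ζ := by
  unfold clumpMatrix at hB
  obtain ⟨a, -, ha⟩ := Finset.exists_ne_zero_of_sum_ne_zero hB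
  obtain ⟨b, -, hb⟩ := Finset.exists_ne_zero_of_sum_ne_zero ha
  rcases mul_ne_zero_iff.1 hb with ⟨h1, hbr⟩
  rcases mul_ne_zero_iff.1 h1 with ⟨h2, hηb⟩
  rcases mul_ne_zero_iff.1 h2 with ⟨-, hηa⟩
  have hηa' : η.1 a ≠ 0 := fun h => hηa (by exact_mod_cast congrArg (Nat.cast : ℕ → ℝ) h)
  have hηb' : η.1 b ≠ 0 := fun h => hηb (by exact_mod_cast congrArg (Nat.cast : ℕ → ℝ) h)
  have ha' : a = x ∨ a = y := by
    by_contra hcon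
    push_neg at hcon
    exact hηa' (hη a hcon.1 hcon.2)
  have hb' : b = x ∨ b = y := by
    by_contra hcon
    push_neg at hcon
    exact hηb' (hη b hcon.1 hcon.2)
  by_cases hζη : ζ = η
  · rw [hζη]; exact hη
  · have hmv : η.move a b = ζ := by
      by_contra hmv
      simp [hmv, hζη] at hbr
    rw [← hmv]
    exact move_suppIn hη ha' hb'

lemma suppIn_sum {x y : V} (hxy : x ≠ y) {η : Config V k} (hη : SuppIn x y η) :
    η.1 x + η.1 y = k := by
  have h3 : ∑ z ∈ ({x, y} : Finset V), η.1 z = η.1 x + η.1 y := Finset.sum_pair hxy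
  have h4 : ∑ z ∈ ({x, y} : Finset V), η.1 z = ∑ z, η.1 z := by
    refine Finset.sum_subset (Finset.subset_univ _) fun z _ hz => ?_
    rw [Finset.mem_insert, Finset.mem_singleton] at hz
    push_neg at hz
    exact hη z hz.1 hz.2
  rw [← h3, h4]
  exact η.2

lemma eq_stack_of_apply_eq (η : Config V k) (y : V) (hy : η.1 y = k) :
    η = stackConfig V k y := by
  have h2 := η.2
  rw [← Finset.sum_erase_add _ _ (Finset.mem_univ y), hy] at h2
  have hz : ∀ z ∈ Finset.univ.erase y, η.1 z = 0 := by
    have hsum0 : ∑ z ∈ Finset.univ.erase y, η.1 z = 0 := by omega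
    intro z hzmem
    exact (Finset.sum_eq_zero_iff).1 hsum0 z hzmem
  refine Subtype.ext (funext fun z => ?_)
  by_cases hzy : z = y
  · subst hzy; simpa [stackConfig] using hy
  · have := hz z (Finset.mem_erase.2 ⟨hzy, Finset.mem_univ z⟩)
    simpa [stackConfig, hzy] using this

lemma exp_mulVec_vanish (c : V → V → ℝ) (t : ℝ) {x y : V} {v : Config V k → ℝ}
    (hv : ∀ ζ, SuppIn x y ζ → v ζ = 0) {η : Config V k} (hη : SuppIn x y η) :
    (NormedSpace.exp (t • clumpMatrix c k)).mulVec v η = 0 := by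
  obtain ⟨-, heq⟩ := exp_mulVec_tsum (t • clumpMatrix c k) v η
  rw [heq]
  have hz : ∀ m : ℕ,
      ((m.factorial : ℝ))⁻¹ * (((t • clumpMatrix c k) ^ m).mulVec v η) = 0 := by
    intro m
    rw [smul_pow, Matrix.smul_mulVec, Pi.smul_apply, smul_eq_mul,
      pow_mulVec_vanish (fun i j hi hij => clump_closed c x y hi hij) hv m η hη]
    ring
  rw [tsum_congr hz]
  exact tsum_zero

lemma exp_mulVec_harmonic (c : V → V → ℝ) (t : ℝ) {v : Config V k → ℝ}
    (hv : (clumpMatrix c k).mulVec v = 0) (η : Config V k) :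
    (NormedSpace.exp (t • clumpMatrix c k)).mulVec v η = v η := by
  obtain ⟨-, heq⟩ := exp_mulVec_tsum (t • clumpMatrix c k) v η
  rw [heq]
  rw [tsum_eq_single 0 ?_]
  · simp [Matrix.one_mulVec]
  · intro m hm
    obtain ⟨j, rfl⟩ := Nat.exists_eq_succ_of_ne_zero hm
    rw [smul_pow, Matrix.smul_mulVec,
      show (clumpMatrix c k) ^ (j + 1) = (clumpMatrix c k) ^ j * clumpMatrix c k from
        pow_succ _ _,
      ← Matrix.mulVec_mulVec, hv, Matrix.mulVec_zero]
    simp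

lemma clump_offdiag_nonneg (c : V → V → ℝ) (hnonneg : ∀ a b, 0 ≤ c a b)
    {η ζ : Config V k} (hne : ζ ≠ η) : 0 ≤ clumpMatrix c k η ζ := by
  unfold clumpMatrix
  refine Finset.sum_nonneg fun a _ => Finset.sum_nonneg fun b _ => ?_
  rw [if_neg hne, sub_zero]
  have h1 : (0:ℝ) ≤ c a b * η.1 a * η.1 b :=
    mul_nonneg (mul_nonneg (hnonneg a b) (by positivity)) (by positivity)
  split <;> simp [h1]

lemma clump_diag_lower (c : V → V → ℝ) (hnonneg : ∀ a b, 0 ≤ c a b) (η : Config V k) :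
    -((∑ a, ∑ b, c a b) * (k : ℝ) ^ 2) ≤ clumpMatrix c k η η := by
  unfold clumpMatrix
  rw [Finset.sum_mul, neg_eq_neg_one_mul, Finset.mul_sum]
  refine Finset.sum_le_sum fun a _ => ?_
  rw [Finset.sum_mul, Finset.mul_sum]
  refine Finset.sum_le_sum fun b _ => ?_
  have hηa : ((η.1 a : ℕ) : ℝ) ≤ k := by exact_mod_cast η.apply_le a
  have hηb : ((η.1 b : ℕ) : ℝ) ≤ k := by exact_mod_cast η.apply_le b
  have hηa0 : (0:ℝ) ≤ ((η.1 a : ℕ) : ℝ) := by positivity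
  have hηb0 : (0:ℝ) ≤ ((η.1 b : ℕ) : ℝ) := by positivity
  have hc := hnonneg a b
  have hk0 : (0:ℝ) ≤ (k:ℝ) := by positivity
  have hI1 : (0:ℝ) ≤ (if η.move a b = η then (1:ℝ) else 0) := by split <;> norm_num
  have hI2 : (if η = η then (1:ℝ) else 0) = 1 := if_pos rfl
  rw [hI2]
  have h5 : ((η.1 a : ℕ) : ℝ) * ((η.1 b : ℕ) : ℝ) ≤ (k:ℝ) * (k:ℝ) :=
    mul_le_mul hηa hηb hηb0 hk0
  have hprod : c a b * η.1 a * η.1 b ≤ c a b * (k:ℝ) ^ 2 := by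
    nlinarith [mul_le_mul_of_nonneg_left h5 hc]
  nlinarith [mul_nonneg (mul_nonneg (mul_nonneg hc hηa0) hηb0) hI1, hprod]

end ConfigLemmas

section SinDecay

variable {V : Type*} [Fintype V] [DecidableEq V] {k : ℕ}

/-- The sine test function supported on the two-site set. -/
def sinF (x y : V) (k : ℕ) : Config V k → ℝ := fun η =>
  if SuppIn x y η then Real.sin (Real.pi * (η.1 y : ℝ) / (k : ℝ)) else 0

lemma sinF_nonneg {x y : V} (hk : 0 < k) (η : Config V k) : 0 ≤ sinF x y k η := by
  unfold sinF
  split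
  · apply Real.sin_nonneg_of_nonneg_of_le_pi
    · positivity
    · have h1 : ((η.1 y : ℕ) : ℝ) ≤ (k : ℝ) := by exact_mod_cast η.apply_le y
      have hk' : (0:ℝ) < (k:ℝ) := by exact_mod_cast hk
      rw [div_le_iff₀ hk']
      calc Real.pi * ((η.1 y : ℕ) : ℝ) ≤ Real.pi * (k:ℝ) :=
          mul_le_mul_of_nonneg_left h1 Real.pi_pos.le
        _ = Real.pi * (k:ℝ) := rfl
  · exact le_refl 0

lemma clump_sin_bound (c : V → V → ℝ) (hsymm : ∀ a b, c a b = c b a)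
    (hnonneg : ∀ a b, 0 ≤ c a b) (hloop : ∀ a, c a a = 0)
    {x y : V} (hxy : x ≠ y) (hk : 2 ≤ k) :
    ∀ η, SuppIn x y η → (clumpMatrix c k).mulVec (sinF x y k) η
      ≤ -((2 - 2 * Real.cos (Real.pi / (k:ℝ))) * c x y) * sinF x y k η := by
  intro η hη
  have hk0 : (0:ℝ) < (k:ℝ) := by
    have : 0 < k := by omega
    exact_mod_cast this
  rw [clump_mulVec]
  set f := sinF x y k with hf
  set T : V → V → ℝ := fun a b => c a b * η.1 a * η.1 b * (f (η.move a b) - f η) with hT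
  have hTa : ∀ a, a ≠ x → a ≠ y → ∀ b, T a b = 0 := by
    intro a hax hay b
    have h0 : η.1 a = 0 := hη a hax hay
    simp [hT, h0]
  have hTxb : ∀ b, b ≠ y → T x b = 0 := by
    intro b hby
    by_cases hbx : b = x
    · rw [hbx]; simp [hT, hloop x]
    · have h0 : η.1 b = 0 := hη b hbx hby
      simp [hT, h0]
  have hTyb : ∀ b, b ≠ x → T y b = 0 := by
    intro b hbx
    by_cases hby : b = y
    · rw [hby]; simp [hT, hloop y]
    · have h0 : η.1 b = 0 := hη b hbx hby
      simp [hT, h0]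
  have h1 : ∀ a, ∑ b, T a b
      = (if a = x then T x y else 0) + (if a = y then T y x else 0) := by
    intro a
    by_cases hax : a = x
    · subst hax
      rw [if_pos rfl, if_neg hxy]
      rw [Finset.sum_eq_single y (fun b _ hb => hTxb b hb)
        (fun hy => absurd (Finset.mem_univ y) hy)]
      ring
    · by_cases hay : a = y
      · subst hay
        rw [if_neg hax, if_pos rfl]
        rw [Finset.sum_eq_single x (fun b _ hb => hTyb b hb)
          (fun hx => absurd (Finset.mem_univ x) hx)]
        ring
      · rw [if_neg hax, if_neg hay]
        simp [Finset.sum_eq_zero fun b _ => hTa a hax hay b]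
  rw [Finset.sum_congr rfl fun a _ => h1 a, Finset.sum_add_distrib,
    Finset.sum_ite_eq' Finset.univ x (fun _ => T x y),
    Finset.sum_ite_eq' Finset.univ y (fun _ => T y x)]
  simp only [Finset.mem_univ, if_true]
  have hfη : f η = Real.sin (Real.pi * (η.1 y : ℝ) / (k:ℝ)) := by
    rw [hf]; unfold sinF; exact if_pos hη
  have hsinA : 0 ≤ Real.sin (Real.pi * (η.1 y : ℝ) / (k:ℝ)) := by
    rw [← hfη, hf]
    exact sinF_nonneg (by omega) η
  by_cases hy0 : η.1 y = 0
  · have hTxy : T x y = 0 := by simp [hT, hy0]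
    have hTyx : T y x = 0 := by simp [hT, hy0]
    have hfη0 : f η = 0 := by rw [hfη, hy0]; simp
    rw [hTxy, hTyx, hfη0]
    norm_num
  by_cases hx0 : η.1 x = 0
  · have hyk : η.1 y = k := by have := suppIn_sum hxy hη; omega
    have hfη0 : f η = 0 := by
      rw [hfη, hyk]
      have hpk : Real.pi * (k:ℝ) / (k:ℝ) = Real.pi := by field_simp
      rw [hpk, Real.sin_pi]
    have hTxy : T x y = 0 := by simp [hT, hx0]
    have hTyx : T y x = 0 := by simp [hT, hx0]
    rw [hTxy, hTyx, hfη0]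
    norm_num
  -- main case
  have hmv1y : (((η.move x y).1 y : ℕ) : ℝ) = ((η.1 y : ℕ) : ℝ) + 1 := by
    rw [move_coe_real η hx0 y y]
    simp [Ne.symm hxy]
  have hmv2y : (((η.move y x).1 y : ℕ) : ℝ) = ((η.1 y : ℕ) : ℝ) - 1 := by
    rw [move_coe_real η hy0 x y]
    simp [Ne.symm hxy]
  have hsupp1 : SuppIn x y (η.move x y) := move_suppIn hη (Or.inl rfl) (Or.inr rfl)
  have hsupp2 : SuppIn x y (η.move y x) := move_suppIn hη (Or.inr rfl) (Or.inl rfl)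
  have hs1 : f (η.move x y)
      = Real.sin (Real.pi * (η.1 y : ℝ) / (k:ℝ) + Real.pi / (k:ℝ)) := by
    rw [hf]
    unfold sinF
    rw [if_pos hsupp1, hmv1y]
    congr 1
    field_simp
  have hs2 : f (η.move y x)
      = Real.sin (Real.pi * (η.1 y : ℝ) / (k:ℝ) - Real.pi / (k:ℝ)) := by
    rw [hf]
    unfold sinF
    rw [if_pos hsupp2, hmv2y]
    congr 1
    field_simp
  have hTxy : T x y = c x y * η.1 x * η.1 y
      * (Real.sin (Real.pi * (η.1 y : ℝ) / (k:ℝ) + Real.pi / (k:ℝ))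
        - Real.sin (Real.pi * (η.1 y : ℝ) / (k:ℝ))) := by
    simp only [hT]
    rw [hs1, hfη]
  have hTyx : T y x = c x y * η.1 x * η.1 y
      * (Real.sin (Real.pi * (η.1 y : ℝ) / (k:ℝ) - Real.pi / (k:ℝ))
        - Real.sin (Real.pi * (η.1 y : ℝ) / (k:ℝ))) := by
    simp only [hT]
    rw [hs2, hfη, hsymm y x]
    ring
  have trig : Real.sin (Real.pi * (η.1 y : ℝ) / (k:ℝ) + Real.pi / (k:ℝ))
      + Real.sin (Real.pi * (η.1 y : ℝ) / (k:ℝ) - Real.pi / (k:ℝ))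
      = 2 * Real.sin (Real.pi * (η.1 y : ℝ) / (k:ℝ)) * Real.cos (Real.pi / (k:ℝ)) := by
    rw [Real.sin_add, Real.sin_sub]
    ring
  have hX1 : (1:ℝ) ≤ ((η.1 x : ℕ) : ℝ) := by
    exact_mod_cast Nat.one_le_iff_ne_zero.2 hx0
  have hY1 : (1:ℝ) ≤ ((η.1 y : ℕ) : ℝ) := by
    exact_mod_cast Nat.one_le_iff_ne_zero.2 hy0
  have hq : (1:ℝ) ≤ ((η.1 x : ℕ) : ℝ) * ((η.1 y : ℕ) : ℝ) := by nlinarith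
  have hcosD : Real.cos (Real.pi / (k:ℝ)) ≤ 1 := Real.cos_le_one _
  have hc := hnonneg x y
  have hsum : T x y + T y x = c x y * ((η.1 x : ℕ) : ℝ) * ((η.1 y : ℕ) : ℝ)
      * (2 * Real.sin (Real.pi * (η.1 y : ℝ) / (k:ℝ))
        * (Real.cos (Real.pi / (k:ℝ)) - 1)) := by
    rw [hTxy, hTyx]
    linear_combination (c x y * ((η.1 x : ℕ) : ℝ) * ((η.1 y : ℕ) : ℝ)) * trig
  rw [hsum, hfη]
  nlinarith [mul_nonneg (mul_nonneg (mul_nonneg (sub_nonneg.2 hcosD) hc) hsinA)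
    (sub_nonneg.2 hq)]

lemma clump_harmonic (c : V → V → ℝ) (hsymm : ∀ a b, c a b = c b a) (y : V) :
    (clumpMatrix c k).mulVec (fun η : Config V k => (η.1 y : ℝ)) = 0 := by
  funext η
  rw [Pi.zero_apply, clump_mulVec]
  have hterm : ∀ a b, c a b * η.1 a * η.1 b * ((((η.move a b).1 y : ℕ):ℝ) - ((η.1 y:ℕ):ℝ))
      = (if b = y then c a b * η.1 a * η.1 b else 0)
        - (if a = y then c a b * η.1 a * η.1 b else 0) := by
    intro a b
    by_cases h0 : η.1 a = 0
    · rw [h0]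
      rcases eq_or_ne b y with h1 | h1 <;> rcases eq_or_ne a y with h2 | h2
      · rw [if_pos h1, if_pos h2]; push_cast; ring
      · rw [if_pos h1, if_neg h2]; push_cast; ring
      · rw [if_neg h1, if_pos h2]; push_cast; ring
      · rw [if_neg h1, if_neg h2]; push_cast; ring
    · rw [move_coe_real η h0 b y]
      rcases eq_or_ne y b with h1 | h1 <;> rcases eq_or_ne y a with h2 | h2
      · rw [if_pos h1, if_pos h2, if_pos h1.symm, if_pos h2.symm]; ring
      · rw [if_pos h1, if_neg h2, if_pos h1.symm, if_neg (Ne.symm h2)]; ring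
      · rw [if_neg h1, if_pos h2, if_neg (Ne.symm h1), if_pos h2.symm]; ring
      · rw [if_neg h1, if_neg h2, if_neg (Ne.symm h1), if_neg (Ne.symm h2)]; ring
  rw [Finset.sum_congr rfl fun a _ => Finset.sum_congr rfl fun b _ => hterm a b]
  simp only [Finset.sum_sub_distrib]
  rw [sub_eq_zero]
  rw [Finset.sum_congr rfl fun a _ =>
    Finset.sum_ite_eq' Finset.univ y (fun b => c a b * η.1 a * η.1 b)]
  have h3 : ∀ a, (∑ b, if a = y then c a b * (η.1 a : ℝ) * η.1 b else 0)
      = if a = y then ∑ b, c a b * (η.1 a : ℝ) * η.1 b else 0 := by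
    intro a
    split <;> simp
  rw [Finset.sum_congr rfl fun a _ => h3 a,
    Finset.sum_ite_eq' Finset.univ y (fun a => ∑ b, c a b * (η.1 a : ℝ) * η.1 b)]
  simp only [Finset.mem_univ, if_true]
  refine Finset.sum_congr rfl fun a _ => ?_
  rw [hsymm a y]
  ring

lemma exp_mulVec_decay (c : V → V → ℝ) (hnonneg : ∀ a b, 0 ≤ c a b)
    {x y : V} {f : Config V k → ℝ} (hf0 : ∀ η, 0 ≤ f η) {ε : ℝ} (hε0 : 0 ≤ ε)
    (hεle : ε ≤ (∑ a, ∑ b, c a b) * (k : ℝ) ^ 2)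
    (hBf : ∀ η, SuppIn x y η → (clumpMatrix c k).mulVec f η ≤ -ε * f η)
    {R : Config V k → ℝ} (hR0 : ∀ η, 0 ≤ R η) {C : ℝ} (hC : 0 ≤ C)
    (hRf : ∀ η, R η ≤ C * f η) {t : ℝ} (ht : 0 ≤ t) {η : Config V k}
    (hη : SuppIn x y η) :
    0 ≤ (NormedSpace.exp (t • clumpMatrix c k)).mulVec R η ∧
      (NormedSpace.exp (t • clumpMatrix c k)).mulVec R η
        ≤ C * f η * Real.exp (-(ε * t)) := by
  set ρ := (∑ a, ∑ b, c a b) * (k : ℝ) ^ 2 with hρ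
  have hρ0 : 0 ≤ ρ := by
    have hcc : 0 ≤ ∑ a, ∑ b, c a b :=
      Finset.sum_nonneg fun a _ => Finset.sum_nonneg fun b _ => hnonneg a b
    positivity
  set Acl := clumpMatrix c k + ρ • (1 : Matrix (Config V k) (Config V k) ℝ) with hAcl
  have hA1 : ∀ i j, Acl i j = clumpMatrix c k i j + ρ * (if i = j then 1 else 0) := by
    intro i j
    simp [hAcl, Matrix.one_apply]
  have hAnn : ∀ i j, 0 ≤ Acl i j := by
    intro i j
    rw [hA1]
    by_cases hij : i = j
    · subst hij
      rw [if_pos rfl, mul_one]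
      have hlow := clump_diag_lower c hnonneg i
      rw [← hρ] at hlow
      linarith
    · rw [if_neg hij, mul_zero, add_zero]
      exact clump_offdiag_nonneg c hnonneg (fun hh => hij hh.symm)
  have hclA : ∀ i j, SuppIn x y i → Acl i j ≠ 0 → SuppIn x y j := by
    intro i j hi hne
    by_cases hij : i = j
    · rw [← hij]; exact hi
    · refine clump_closed c x y hi ?_
      intro h0
      rw [hA1, h0, if_neg hij] at hne
      simp at hne
  have hstepA : ∀ i, SuppIn x y i → Acl.mulVec f i ≤ (ρ - ε) * f i := by
    intro i hi
    have h2 : Acl.mulVec f i = (clumpMatrix c k).mulVec f i + ρ * f i := by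
      rw [hAcl, Matrix.add_mulVec, Matrix.smul_mulVec, Matrix.one_mulVec]
      simp [smul_eq_mul]
    have h3 := hBf i hi
    rw [h2]
    nlinarith [h3]
  have hr0 : 0 ≤ ρ - ε := by linarith
  have hshift := exp_shift t ρ (clumpMatrix c k)
  have hsmul : t • clumpMatrix c k + (t * ρ) • (1 : Matrix (Config V k) (Config V k) ℝ)
      = t • Acl := by
    rw [hAcl, smul_add, smul_smul]
  rw [hsmul] at hshift
  have hmv : (NormedSpace.exp (t • clumpMatrix c k)).mulVec R η
      = Real.exp (-(t * ρ)) * ((NormedSpace.exp (t • Acl)).mulVec R η) := by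
    rw [hshift, Matrix.smul_mulVec, Pi.smul_apply, smul_eq_mul]
  obtain ⟨hsumR, heqR⟩ := exp_mulVec_tsum (t • Acl) R η
  have hform : ∀ m : ℕ, ((t • Acl) ^ m).mulVec R η = t ^ m * ((Acl ^ m).mulVec R η) := by
    intro m
    rw [smul_pow, Matrix.smul_mulVec, Pi.smul_apply, smul_eq_mul]
  have hterm0 : ∀ m : ℕ,
      0 ≤ ((m.factorial:ℝ))⁻¹ * (((t • Acl) ^ m).mulVec R η) := by
    intro m
    rw [hform]
    have hge := mulVec_nonneg (pow_entry_nonneg hAnn m) hR0 η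
    have htm : (0:ℝ) ≤ t ^ m := pow_nonneg ht m
    positivity
  constructor
  · rw [hmv, heqR]
    exact mul_nonneg (Real.exp_nonneg _) (tsum_nonneg hterm0)
  · rw [hmv, heqR]
    have hub : ∀ m : ℕ, ((m.factorial:ℝ))⁻¹ * (((t • Acl) ^ m).mulVec R η)
        ≤ (C * f η) * (((m.factorial:ℝ))⁻¹ * (t * (ρ - ε)) ^ m) := by
      intro m
      rw [hform]
      have h4 : (Acl ^ m).mulVec R η ≤ (Acl ^ m).mulVec (fun j => C * f j) η :=
        mulVec_mono (pow_entry_nonneg hAnn m) (fun j => hRf j) η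
      have h5 : (Acl ^ m).mulVec (fun j => C * f j) η = C * ((Acl ^ m).mulVec f η) :=
        mulVec_const_mul _ C f η
      have h6 : (Acl ^ m).mulVec f η ≤ (ρ - ε) ^ m * f η :=
        pow_mulVec_le hAnn hclA hr0 hstepA m η hη
      have h7 : (Acl ^ m).mulVec R η ≤ C * ((ρ - ε) ^ m * f η) :=
        (h4.trans_eq h5).trans (mul_le_mul_of_nonneg_left h6 hC)
      have hfact : (0:ℝ) ≤ ((m.factorial:ℝ))⁻¹ := by positivity
      have htm : (0:ℝ) ≤ t ^ m := pow_nonneg ht m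
      calc ((m.factorial:ℝ))⁻¹ * (t ^ m * ((Acl ^ m).mulVec R η))
          ≤ ((m.factorial:ℝ))⁻¹ * (t ^ m * (C * ((ρ - ε) ^ m * f η))) := by
            exact mul_le_mul_of_nonneg_left (mul_le_mul_of_nonneg_left h7 htm) hfact
        _ = (C * f η) * (((m.factorial:ℝ))⁻¹ * (t * (ρ - ε)) ^ m) := by
            rw [mul_pow]
            ring
    have hsum2 : Summable fun m : ℕ =>
        (C * f η) * (((m.factorial:ℝ))⁻¹ * (t * (ρ - ε)) ^ m) :=
      (real_exp_tsum (t * (ρ - ε))).1.mul_left _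
    have hle := Summable.tsum_le_tsum hub hsumR hsum2
    rw [tsum_mul_left, ← (real_exp_tsum (t * (ρ - ε))).2] at hle
    calc Real.exp (-(t * ρ))
          * (∑' m : ℕ, ((m.factorial:ℝ))⁻¹ * (((t • Acl) ^ m).mulVec R η))
        ≤ Real.exp (-(t * ρ)) * ((C * f η) * Real.exp (t * (ρ - ε))) :=
          mul_le_mul_of_nonneg_left hle (Real.exp_nonneg _)
      _ = C * f η * (Real.exp (-(t * ρ)) * Real.exp (t * (ρ - ε))) := by ring
      _ = C * f η * Real.exp (-(ε * t)) := by
          rw [← Real.exp_add]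
          congr 1
          ring

end SinDecay

end MetaAux

end MetaAux

theorem metastable_single_stack_is_random_walk
    {V : Type*} [Fintype V] [DecidableEq V] (c : V → V → ℝ) (β : V → ℝ)
    (hsymm : ∀ x y, c x y = c y x) (hnonneg : ∀ x y, 0 ≤ c x y)
    (hloop : ∀ x, c x x = 0) (hconn : (graphOf c).Connected)
    (hβ : ∀ x, 0 < β x) (k : ℕ) (hk : 2 ≤ k)
    (h : Config V k → Config V k → ℝ)
    (hlim : ∀ ξ : Config V k, inOmega c ξ → ∀ ζ : Config V k,
      Filter.Tendsto
        (fun t : ℝ => (NormedSpace.exp (t • clumpMatrix c k)).mulVec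
          (fun ρ => if ρ = ξ then 1 else 0) ζ)
        Filter.atTop (nhds (h ξ ζ))) :
    ∀ x y : V, x ≠ y →
      rateM c β h (stackConfig V k x) (stackConfig V k y) = c x y * β y := by
  classical
  intro x y hxy
  have hk0 : k ≠ 0 := by omega
  have hkR : (0:ℝ) < (k:ℝ) := by exact_mod_cast Nat.pos_of_ne_zero hk0
  set η₀ := stackConfig V k x with hη₀
  set ξ := stackConfig V k y with hξ
  have hη₀x : η₀.1 x = k := by simp [hη₀, stackConfig]
  have hη₀z : ∀ z, z ≠ x → η₀.1 z = 0 := fun z hz => by simp [hη₀, stackConfig, hz]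
  have hη₀xne : η₀.1 x ≠ 0 := by rw [hη₀x]; exact hk0
  have hξy : ξ.1 y = k := by simp [hξ, stackConfig]
  have hΩ : inOmega c ξ := by
    intro a b
    by_cases hay : a = y
    · by_cases hby : b = y
      · rw [hay, hby, hloop y]; ring
      · have hb0 : ξ.1 b = 0 := by simp [hξ, stackConfig, hby]
        rw [hb0]; push_cast; ring
    · have ha0 : ξ.1 a = 0 := by simp [hξ, stackConfig, hay]
      rw [ha0]; push_cast; ring
  have hrateA : ∀ ζ : Config V k, rateA c β η₀ ζ
      = ∑ b, (if η₀.move x b = ζ then c x b * (k:ℝ) * β b else 0) := by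
    intro ζ
    unfold rateA
    rw [Finset.sum_eq_single x]
    · refine Finset.sum_congr rfl fun b _ => ?_
      simp [hη₀x, hk0]
    · intro a _ hax
      refine Finset.sum_eq_zero fun b _ => ?_
      rw [if_neg]
      rintro ⟨hne, -⟩
      exact hne (hη₀z a hax)
    · intro hmem
      exact absurd (Finset.mem_univ x) hmem
  have hrateM : rateM c β h η₀ ξ
      = ∑ b, c x b * (k:ℝ) * β b * h ξ (η₀.move x b) := by
    unfold rateM
    rw [Finset.sum_congr rfl fun ζ _ => by rw [hrateA ζ, Finset.sum_mul]]
    rw [Finset.sum_comm]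
    refine Finset.sum_congr rfl fun b _ => ?_
    simp only [ite_mul, zero_mul]
    rw [Finset.sum_ite_eq Finset.univ (η₀.move x b)
      (fun ζ => c x b * (k:ℝ) * β b * h ξ ζ)]
    simp
  have hvanish : ∀ b, b ≠ x → b ≠ y → h ξ (η₀.move x b) = 0 := by
    intro b hbx hby
    have hsupp : MetaAux.SuppIn x b (η₀.move x b) := by
      intro z hzx hzb
      rw [MetaAux.move_coe η₀ hη₀xne b z]
      simp [hη₀z z hzx, hzx, hzb]
    have hv : ∀ ζ : Config V k, MetaAux.SuppIn x b ζ
        → (fun ρ => if ρ = ξ then (1:ℝ) else 0) ζ = 0 := by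
      intro ζ hζ
      have hne : ζ ≠ ξ := by
        intro he
        have h1 : ζ.1 y = 0 := hζ y (Ne.symm hxy) (Ne.symm hby)
        rw [he, hξy] at h1
        exact hk0 h1
      simp [hne]
    have h0 : ∀ t : ℝ, (NormedSpace.exp (t • clumpMatrix c k)).mulVec
        (fun ρ => if ρ = ξ then (1:ℝ) else 0) (η₀.move x b) = 0 :=
      fun t => MetaAux.exp_mulVec_vanish c t hv hsupp
    exact tendsto_nhds_unique ((hlim ξ hΩ (η₀.move x b)).congr h0) tendsto_const_nhds
  rw [hrateM, Finset.sum_eq_single y]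
  rotate_left
  · intro b _ hby
    by_cases hbx : b = x
    · rw [hbx, hloop x]; ring
    · rw [hvanish b hbx hby]; ring
  · intro hmem
    exact absurd (Finset.mem_univ y) hmem
  by_cases hcxy : c x y = 0
  · rw [hcxy]; ring
  · have hcpos : 0 < c x y := lt_of_le_of_ne (hnonneg x y) (Ne.symm hcxy)
    have hζ₀supp : MetaAux.SuppIn x y (η₀.move x y) := by
      intro z hzx hzy
      rw [MetaAux.move_coe η₀ hη₀xne y z]
      simp [hη₀z z hzx, hzx, hzy]
    have hζ₀y : (((η₀.move x y).1 y : ℕ) : ℝ) = 1 := by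
      rw [MetaAux.move_coe_real η₀ hη₀xne y y]
      simp [Ne.symm hxy, hη₀z y (Ne.symm hxy)]
    have hG := MetaAux.clump_harmonic (k := k) c hsymm y
    have hGexp : ∀ t : ℝ, (NormedSpace.exp (t • clumpMatrix c k)).mulVec
        (fun η : Config V k => ((η.1 y : ℕ) : ℝ)) (η₀.move x y) = 1 := by
      intro t
      rw [MetaAux.exp_mulVec_harmonic c t hG, hζ₀y]
    set W : Config V k → ℝ :=
      fun η => if MetaAux.SuppIn x y η then ((η.1 y : ℕ) : ℝ) else 0 with hW
    have hWexp : ∀ t : ℝ,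
        (NormedSpace.exp (t • clumpMatrix c k)).mulVec W (η₀.move x y) = 1 := by
      intro t
      have hv : ∀ ζ, MetaAux.SuppIn x y ζ →
          ((fun η : Config V k => ((η.1 y : ℕ) : ℝ)) - W) ζ = 0 := by
        intro ζ hζ
        simp [hW, hζ]
      have h1 := MetaAux.exp_mulVec_vanish c t hv hζ₀supp
      rw [Matrix.mulVec_sub] at h1
      simp only [Pi.sub_apply] at h1
      have h2 := hGexp t
      linarith
    set R : Config V k → ℝ := fun η =>
      if MetaAux.SuppIn x y η ∧ η ≠ ξ then ((η.1 y : ℕ) : ℝ) else 0 with hR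
    have hξsupp : MetaAux.SuppIn x y ξ := by
      intro z hzx hzy
      simp [hξ, stackConfig, hzy]
    have hWdecomp : W = (fun ρ : Config V k =>
        (k:ℝ) * (if ρ = ξ then (1:ℝ) else 0)) + R := by
      funext ρ
      simp only [Pi.add_apply, hW, hR]
      by_cases h1 : ρ = ξ
      · subst h1
        simp [hξsupp, hξy]
      · by_cases h2 : MetaAux.SuppIn x y ρ
        · simp [h1, h2]
        · simp [h1, h2]
    set f := MetaAux.sinF x y k with hf
    set ε := (2 - 2 * Real.cos (Real.pi / (k:ℝ))) * c x y with hε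
    have hf0 : ∀ η, 0 ≤ f η := MetaAux.sinF_nonneg (Nat.pos_of_ne_zero hk0)
    have hBf := MetaAux.clump_sin_bound c hsymm hnonneg hloop hxy hk
    have hcosD : Real.cos (Real.pi / (k:ℝ)) < 1 := by
      have h1 : (0:ℝ) < Real.pi / (k:ℝ) := by positivity
      have h2 : Real.pi / (k:ℝ) ≤ Real.pi := by
        apply div_le_self Real.pi_pos.le
        exact_mod_cast Nat.one_le_iff_ne_zero.2 hk0
      calc Real.cos (Real.pi / (k:ℝ)) < Real.cos 0 :=
          Real.cos_lt_cos_of_nonneg_of_le_pi le_rfl h2 h1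
        _ = 1 := Real.cos_zero
    have hε0 : 0 < ε := by
      rw [hε]
      have : 0 < 2 - 2 * Real.cos (Real.pi / (k:ℝ)) := by linarith
      exact mul_pos this hcpos
    have hεle : ε ≤ (∑ a, ∑ b, c a b) * (k:ℝ) ^ 2 := by
      have h1 : c x y ≤ ∑ b, c x b :=
        Finset.single_le_sum (fun b _ => hnonneg x b) (Finset.mem_univ y)
      have h2 : (∑ b, c x b) ≤ ∑ a, ∑ b, c a b :=
        Finset.single_le_sum (f := fun a => ∑ b, c a b)
          (fun a _ => Finset.sum_nonneg fun b _ => hnonneg a b) (Finset.mem_univ x)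
      have h3 : (-1:ℝ) ≤ Real.cos (Real.pi / (k:ℝ)) := Real.neg_one_le_cos _
      have h4 : (2:ℝ) ≤ (k:ℝ) := by exact_mod_cast hk
      have hS : 0 ≤ ∑ a, ∑ b, c a b :=
        Finset.sum_nonneg fun a _ => Finset.sum_nonneg fun b _ => hnonneg a b
      have hcS : c x y ≤ ∑ a, ∑ b, c a b := h1.trans h2
      have hk4 : (4:ℝ) ≤ (k:ℝ)^2 := by nlinarith
      rw [hε]
      calc (2 - 2 * Real.cos (Real.pi / (k:ℝ))) * c x y
          ≤ 4 * c x y := mul_le_mul_of_nonneg_right (by linarith) (hnonneg x y)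
        _ ≤ 4 * (∑ a, ∑ b, c a b) := by linarith
        _ ≤ (k:ℝ)^2 * (∑ a, ∑ b, c a b) := mul_le_mul_of_nonneg_right hk4 hS
        _ = (∑ a, ∑ b, c a b) * (k:ℝ)^2 := mul_comm _ _
    have hIne : (Finset.Icc 1 (k-1)).Nonempty := ⟨1, by
      rw [Finset.mem_Icc]; omega⟩
    set s0 := (Finset.Icc 1 (k-1)).inf' hIne
      (fun m => Real.sin (Real.pi * (m:ℝ) / (k:ℝ))) with hs0
    have hs0pos : 0 < s0 := by
      rw [hs0, Finset.lt_inf'_iff]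
      intro m hm
      rw [Finset.mem_Icc] at hm
      have hm1 : (1:ℝ) ≤ (m:ℝ) := by exact_mod_cast hm.1
      have hmk : (m:ℝ) < (k:ℝ) := by exact_mod_cast (by omega : m < k)
      apply Real.sin_pos_of_pos_of_lt_pi
      · apply div_pos (mul_pos Real.pi_pos (by linarith)) hkR
      · rw [div_lt_iff₀ hkR]
        exact mul_lt_mul_of_pos_left hmk Real.pi_pos
    set C := (k:ℝ) / s0 with hC
    have hC0 : 0 ≤ C := by positivity
    have hR0 : ∀ η, 0 ≤ R η := by
      intro η
      rw [hR]
      dsimp only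
      split
      · positivity
      · exact le_refl 0
    have hRf : ∀ η, R η ≤ C * f η := by
      intro η
      rw [hR]
      dsimp only
      by_cases hcond : MetaAux.SuppIn x y η ∧ η ≠ ξ
      · rw [if_pos hcond]
        have hfη : f η = Real.sin (Real.pi * (η.1 y : ℝ) / (k:ℝ)) := by
          rw [hf]
          unfold MetaAux.sinF
          exact if_pos hcond.1
        by_cases hm0 : η.1 y = 0
        · rw [hm0, hfη, hm0]
          simp
        · have hm1 : 1 ≤ η.1 y := Nat.one_le_iff_ne_zero.2 hm0
          have hmk : η.1 y ≤ k - 1 := by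
            by_contra hcon
            have hyk : η.1 y = k := by
              have := η.apply_le y
              omega
            exact hcond.2 (hξ ▸ MetaAux.eq_stack_of_apply_eq η y hyk)
          have hmem : η.1 y ∈ Finset.Icc 1 (k-1) := Finset.mem_Icc.2 ⟨hm1, hmk⟩
          have hles0 : s0 ≤ Real.sin (Real.pi * (η.1 y : ℝ) / (k:ℝ)) := by
            rw [hs0]
            exact Finset.inf'_le _ hmem
          have hηk : ((η.1 y : ℕ) : ℝ) ≤ (k:ℝ) := by exact_mod_cast η.apply_le y
          calc ((η.1 y : ℕ) : ℝ) ≤ (k:ℝ) := hηk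
            _ = C * s0 := by
                rw [hC]
                field_simp
            _ ≤ C * f η := by
                rw [hfη]
                exact mul_le_mul_of_nonneg_left hles0 hC0
      · rw [if_neg hcond]
        exact mul_nonneg hC0 (hf0 η)
    set L : ℝ → ℝ := fun t => (NormedSpace.exp (t • clumpMatrix c k)).mulVec
      (fun ρ => if ρ = ξ then (1:ℝ) else 0) (η₀.move x y) with hL
    set Er : ℝ → ℝ := fun t => (NormedSpace.exp (t • clumpMatrix c k)).mulVec R
      (η₀.move x y) with hEr
    have hsum1 : ∀ t, (k:ℝ) * L t + Er t = 1 := by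
      intro t
      have h1 := hWexp t
      rw [hWdecomp, Matrix.mulVec_add] at h1
      have h2 : (NormedSpace.exp (t • clumpMatrix c k)).mulVec
          (fun ρ : Config V k => (k:ℝ) * (if ρ = ξ then (1:ℝ) else 0)) (η₀.move x y)
          = (k:ℝ) * L t :=
        MetaAux.mulVec_const_mul _ _ _ _
      simp only [Pi.add_apply] at h1
      rw [h2] at h1
      exact h1
    have hbounds : ∀ t : ℝ, 0 ≤ t →
        0 ≤ Er t ∧ Er t ≤ C * f (η₀.move x y) * Real.exp (-(ε * t)) :=
      fun t ht =>
        MetaAux.exp_mulVec_decay c hnonneg hf0 hε0.le hεle hBf hR0 hC0 hRf ht hζ₀supp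
    have hK : Filter.Tendsto (fun t : ℝ => C * f (η₀.move x y) * Real.exp (-(ε * t)))
        Filter.atTop (nhds 0) := by
      have h1 : Filter.Tendsto (fun t : ℝ => ε * t) Filter.atTop Filter.atTop :=
        Filter.Tendsto.const_mul_atTop hε0 Filter.tendsto_id
      have h2 := Real.tendsto_exp_neg_atTop_nhds_zero.comp h1
      have h3 := h2.const_mul (C * f (η₀.move x y))
      simpa using h3
    have hEr0 : Filter.Tendsto Er Filter.atTop (nhds 0) := by
      refine tendsto_of_tendsto_of_tendsto_of_le_of_le' tendsto_const_nhds hK ?_ ?_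
      · exact (Filter.eventually_ge_atTop 0).mono fun t ht => (hbounds t ht).1
      · exact (Filter.eventually_ge_atTop 0).mono fun t ht => (hbounds t ht).2
    have hLlim : Filter.Tendsto L Filter.atTop (nhds ((k:ℝ)⁻¹)) := by
      have hkne : (k:ℝ) ≠ 0 := ne_of_gt hkR
      have h0 : ∀ t, L t = (1 - Er t) * (k:ℝ)⁻¹ := by
        intro t
        have h1 := hsum1 t
        have h2 : L t = (1 - Er t) / (k:ℝ) := by
          rw [eq_div_iff hkne]
          linear_combination h1
        rw [h2, div_eq_mul_inv]
      have h2 : Filter.Tendsto (fun t => (1 - Er t) * (k:ℝ)⁻¹) Filter.atTop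
          (nhds ((1 - 0) * (k:ℝ)⁻¹)) :=
        (tendsto_const_nhds.sub hEr0).mul_const _
      have h3 := h2.congr fun t => (h0 t).symm
      simpa using h3
    have hval : h ξ (η₀.move x y) = (k:ℝ)⁻¹ :=
      tendsto_nhds_unique (hlim ξ hΩ (η₀.move x y)) hLlim
    rw [hval]
    field_simp
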